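/- Let G be a DAG and suppose an i-j path π is d-connecting given pa(i) and contains exactly one collider whose middle node is k, where the portion of π from i to the collider is a directed path out of i. Then k ∈ An(pa(i)) implies G contains a directed cycle; hence in a DAG no such path exists. -/

import Mathlib

variable {V : Type*}

/-- Undirected adjacency in a digraph given by edge relation `E`. -/
def Adjd (E : V → V → Prop) (i j : V) : Prop := E i j ∨ E j i

/-- Parents of a node. -/
def pa (E : V → V → Prop) (j : V) : Set V := {u | E u j}

/-- A directed path from `i` to `j`, as a nonrepeating list of consecutive vertices. -/
def IsDirPath (E : V → V → Prop) (p : List V) (i j : V) : Prop :=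
  p.Chain' E ∧ p.head? = some i ∧ p.getLast? = some j ∧ p.Nodup

/-- An undirected path from `i` to `j`. -/
def IsUndirPath (E : V → V → Prop) (p : List V) (i j : V) : Prop :=
  p.Chain' (Adjd E) ∧ p.head? = some i ∧ p.getLast? = some j ∧ p.Nodup

/-- Interior (non-endpoint) vertices of a path. -/
def interiorL (p : List V) : List V := (p.drop 1).dropLast

/-- `k` is a collider on the path `p`: both path-edges at `k` point into `k`. -/
def IsColliderOn (E : V → V → Prop) (p : List V) (k : V) : Prop :=
  ∃ (l₁ l₂ : List V) (a b : V), p = l₁ ++ a :: k :: b :: l₂ ∧ E a k ∧ E b k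

/-- A digraph is acyclic if it has no directed cycles. -/
def Acyclic (E : V → V → Prop) : Prop := ∀ i, ¬ Relation.TransGen E i i

/-- `k ∈ An(K)`: `k` lies in `K` or is an ancestor of a member of `K`. -/
def InAn (E : V → V → Prop) (K : Set V) (k : V) : Prop :=
  k ∈ K ∨ ∃ m ∈ K, Relation.TransGen E k m

/-- The path `p` is d-connecting between `i` and `j` given `K`. -/
def DConnecting (E : V → V → Prop) (K : Set V) (p : List V) (i j : V) : Prop :=
  IsUndirPath E p i j ∧
  (∀ k, IsColliderOn E p k → InAn E K k) ∧
  (∀ k, k ∈ interiorL p → ¬ IsColliderOn E p k → k ∉ K)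

/-- d-separation of `i` and `j` given `K`. -/
def DSep (E : V → V → Prop) (K : Set V) (i j : V) : Prop :=
  ¬ ∃ p, DConnecting E K p i j

/-- The path `p` is *-connecting: d-connecting with at most one collider. -/
def StarConnecting (E : V → V → Prop) (K : Set V) (p : List V) (i j : V) : Prop :=
  DConnecting E K p i j ∧
  ∀ k₁ k₂, IsColliderOn E p k₁ → IsColliderOn E p k₂ → k₁ = k₂

/-- *-separation of `i` and `j` given `K`. -/
def StarSep (E : V → V → Prop) (K : Set V) (i j : V) : Prop :=
  ¬ ∃ p, StarConnecting E K p i j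

/-- The weight of a directed path: product of its edge weights. -/
def pathWeight (C : V → V → ℝ) (p : List V) : ℝ :=
  ((p.zip p.tail).map fun q => C q.1 q.2).prod

/-- A critical (maximum-weight) directed path from `i` to `j`. -/
def IsCritical (E : V → V → Prop) (C : V → V → ℝ) (p : List V) (i j : V) : Prop :=
  IsDirPath E p i j ∧ 2 ≤ p.length ∧
  ∀ q, IsDirPath E q i j → 2 ≤ q.length → pathWeight C q ≤ pathWeight C p

/-- Genericity of the weights: critical paths are unique when they exist. -/
def Generic (E : V → V → Prop) (C : V → V → ℝ) : Prop :=
  ∀ i j p q, IsCritical E C p i j → IsCritical E C q i j → p = q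

/-- Positivity of the edge weights. -/
def PosWeights (E : V → V → Prop) (C : V → V → ℝ) : Prop :=
  ∀ a b, E a b → 0 < C a b

/-- Edge of the weighted transitive reduction `G^tr_C`: the edge `i → j` is present in `G`
and every other directed `i`-`j` path has strictly smaller weight. -/
def TrEdge (E : V → V → Prop) (C : V → V → ℝ) (i j : V) : Prop :=
  E i j ∧ ∀ q, IsDirPath E q i j → 2 ≤ q.length → q ≠ [i, j] → pathWeight C q < C i j

/-- A path factors through `K` (relative to endpoints `i`,`j`). -/
def FactorsThrough (p : List V) (K : Set V) (i j : V) : Prop :=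
  ∃ k ∈ interiorL p, k ∈ K ∧ k ≠ i ∧ k ≠ j

/-- Edge of the critical DAG `G*_K(C)`. -/
def CritEdge (E : V → V → Prop) (C : V → V → ℝ) (K : Set V) (i j : V) : Prop :=
  (∃ p, IsDirPath E p i j ∧ 2 ≤ p.length) ∧
  ∀ p, IsCritical E C p i j → ¬ FactorsThrough p K i j

/-- `i` and `j` are C*-connected given `K`: one of the five types of connecting
paths exists in the critical DAG `G*_K(C)`. -/
def CStarConnected (E : V → V → Prop) (C : V → V → ℝ) (K : Set V) (i j : V) : Prop :=
  (CritEdge E C K i j ∨ CritEdge E C K j i) ∨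
  (∃ p, p ∉ K ∧ CritEdge E C K p i ∧ CritEdge E C K p j) ∨
  (∃ l ∈ K, CritEdge E C K i l ∧ CritEdge E C K j l) ∨
  (∃ p, ∃ l ∈ K, p ∉ K ∧ CritEdge E C K p i ∧ CritEdge E C K p l ∧ CritEdge E C K j l) ∨
  (∃ p, ∃ l ∈ K, p ∉ K ∧ CritEdge E C K p j ∧ CritEdge E C K p l ∧ CritEdge E C K i l) ∨
  (∃ p q, ∃ l ∈ K, p ∉ K ∧ q ∉ K ∧ CritEdge E C K p i ∧ CritEdge E C K p l ∧
    CritEdge E C K q l ∧ CritEdge E C K q j)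

/-- C*-separation of `i` and `j` given `K`. -/
def CStarSep (E : V → V → Prop) (C : V → V → ℝ) (K : Set V) (i j : V) : Prop :=
  ¬ CStarConnected E C K i j

/-- `b` immediately follows `a` in the cyclic order given by the list `p`. -/
def CycConsec (p : List V) (a b : V) : Prop :=
  ∃ t : Fin p.length, p.get t = a ∧
    p.get ⟨(t.val + 1) % p.length, Nat.mod_lt _ t.pos⟩ = b

/-- The list `p` enumerates, in cyclic order, an induced subgraph of the digraph `E`
which is (as an undirected graph) a simple cycle. -/
def IsInducedCycleList (E : V → V → Prop) (p : List V) : Prop :=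
  p.Nodup ∧ 3 ≤ p.length ∧
  ∀ a ∈ p, ∀ b ∈ p, (Adjd E a b ↔ (CycConsec p a b ∨ CycConsec p b a))

/-- `k` is a collider of the induced cycle `p`: both incident cycle edges point into `k`. -/
def CycCollider (E : V → V → Prop) (p : List V) (k : V) : Prop :=
  ∃ a b, a ≠ b ∧ CycConsec p a k ∧ CycConsec p k b ∧ E a k ∧ E b k


private theorem chain'_tg (E : V → V → Prop) :
    ∀ q : List V, q.Chain' E → ∀ x y, q.head? = some x → q.getLast? = some y →
      2 ≤ q.length → Relation.TransGen E x y := by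
  intro q
  induction q with
  | nil => intro _ x y h; simp at h
  | cons v t ih =>
    intro hc x y hx hy hlen
    simp at hx; subst hx
    match t, hc, hy, hlen, ih with
    | [], _, _, hlen, _ => simp at hlen
    | w :: t', hc, hy, _, ih =>
      rw [List.Chain', List.isChain_cons_cons] at hc
      rw [List.getLast?_cons_cons] at hy
      rcases t' with _ | ⟨u, t''⟩
      · simp at hy
        subst hy
        exact Relation.TransGen.single hc.1
      · exact (ih hc.2 w y rfl hy (by simp)).head hc.1

/-- If an `i`-`j` path `π` is d-connecting given `pa i`, contains exactly one
collider with middle node `k`, and the portion of `π` from `i` to the collider is a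
directed path out of `i`, then `k ∈ An(pa i)` implies a directed cycle exists; hence in a
DAG no such path exists. -/
theorem unique_collider_ancestor_cycle
    (E : V → V → Prop) (i j k : V) (p l₁ l₂ : List V) (a b : V)
    (hp : p = l₁ ++ a :: k :: b :: l₂)
    (hdc : DConnecting E (pa E i) p i j)
    (hak : E a k) (hbk : E b k)
    (huniq : ∀ k', IsColliderOn E p k' → k' = k)
    (hdir : (l₁ ++ [a, k]).Chain' E) :
    (InAn E (pa E i) k → ∃ m, Relation.TransGen E m m) ∧ (Acyclic E → False) := by
  have hIn : InAn E (pa E i) k := hdc.2.1 k ⟨l₁, l₂, a, b, hp, hak, hbk⟩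
  have hhead : (l₁ ++ [a, k]).head? = some i := by
    have := hdc.1.2.1
    rw [hp] at this
    cases l₁ <;> simpa using this
  have hlast : (l₁ ++ [a, k]).getLast? = some k := by
    simp [List.getLast?_append]
  have hik : Relation.TransGen E i k :=
    chain'_tg E (l₁ ++ [a, k]) hdir i k hhead hlast (by simp)
  have hki : Relation.TransGen E k i := by
    rcases hIn with h | ⟨m, hm, htg⟩
    · exact Relation.TransGen.single h
    · exact htg.tail hm
  have hcyc : Relation.TransGen E i i := hik.trans hki
  exact ⟨fun _ => ⟨i, hcyc⟩, fun hA => hA i hcyc⟩
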